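/- Monotonicity of online determinability under subsets: for nonempty finite sets of states S₁ ⊆ S₂, if S₂ is online determinable (i.e., Γ(S₂) ≠ ∞ in the paper's notation), then S₁ is online determinable. -/
import Mathlib


variable {I S O : Type} [Fintype I] [Fintype S] [Fintype O]
  [DecidableEq I] [DecidableEq S] [DecidableEq O]

/-- Output sequence generated from state `s` by input word `w`. -/
def Hout (sig : I → S → S) (rho : S → O) : S → List I → List O
  | s, [] => [rho s]
  | s, i :: w => rho s :: Hout sig rho (sig i s) w

/-- Derivation function: successors of `T` under input `i` producing output `o`. -/
def zeta (sig : I → S → S) (rho : S → O) (T : Finset S) (i : I) (o : O) : Finset S :=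
  (T.image (sig i)).filter (fun s' => rho s' = o)

/-- Online determinability of a finite set of states. -/
inductive Det (sig : I → S → S) (rho : S → O) : Finset S → Prop
  | single (T : Finset S) (h : T.card = 1) : Det sig rho T
  | step (T : Finset S) (i : I) (hinj : (T.image (sig i)).card = T.card)
      (h : ∀ o : O, (zeta sig rho T i o).Nonempty → Det sig rho (zeta sig rho T i o)) :
      Det sig rho T

/-- Safe inputs for a set of states. -/
def psi (sig : I → S → S) (rho : S → O) (T : Finset S) : Set I :=
  {i | (T.image (sig i)).card = T.card ∧
    ∀ o : O, (zeta sig rho T i o).Nonempty → Det sig rho (zeta sig rho T i o)}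

theorem det_mono (sig : I → S → S) (rho : S → O) (T1 T2 : Finset S)
    (hsub : T1 ⊆ T2) (hne : T1.Nonempty) (hdet : Det sig rho T2) :
    Det sig rho T1 := by
  induction hdet generalizing T1 with
  | single T h =>
    exact Det.single T1 (le_antisymm (h ▸ Finset.card_le_card hsub)
      (Finset.one_le_card.mpr hne))
  | step T i hinj h ih =>
    have hinjOn : Set.InjOn (sig i) T := by
      exact Finset.injOn_of_card_image_eq hinj
    refine Det.step T1 i ?_ ?_
    · exact Finset.card_image_of_injOn (hinjOn.mono (by exact_mod_cast hsub))
    · intro o hone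
      have hzsub : zeta sig rho T1 i o ⊆ zeta sig rho T i o := by
        intro x hx
        simp only [zeta, Finset.mem_filter, Finset.mem_image] at hx ⊢
        obtain ⟨⟨s, hs, rfl⟩, hr⟩ := hx
        exact ⟨⟨s, hsub hs, rfl⟩, hr⟩
      exact ih o ⟨hone.choose, hzsub hone.choose_spec⟩ _ hzsub hone
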